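/- Let k ≥ 1, a ≥ 1, b ≥ 0 be integers with gcd(a,b)=1, let p be a prime with p ∤ a, and let n be a positive integer. Then v_p(g_{k,a,b}(n)) = ∑_{e=1}^{E} (#{0 ≤ i ≤ k : p^e ∣ b+(n+i)a} − 1), where E = ⌊log_p k⌋ and g_{k,a,b}(n) = (∏_{i=0}^{k}(b+(n+i)a)) / lcm(b+na, ..., b+(n+k)a). -/

import Mathlib

private lemma my_lcm_ne_zero (s : Finset ℕ) (f : ℕ → ℕ) (hf : ∀ i ∈ s, f i ≠ 0) :
    s.lcm f ≠ 0 := by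
  classical
  induction s using Finset.induction_on with
  | empty => simp [Finset.lcm_empty]
  | insert c s' h ih =>
    rw [Finset.lcm_insert]
    have h1 : f c ≠ 0 := hf c (Finset.mem_insert_self c s')
    have h2 : s'.lcm f ≠ 0 := ih fun i hi => hf i (Finset.mem_insert_of_mem hi)
    exact Nat.lcm_ne_zero h1 h2

private lemma my_lcm_factorization (p : ℕ) (s : Finset ℕ) (f : ℕ → ℕ)
    (hf : ∀ i ∈ s, f i ≠ 0) :
    (s.lcm f).factorization p = s.sup fun i => (f i).factorization p := by
  classical
  induction s using Finset.induction_on with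
  | empty => simp [Finset.lcm_empty]
  | insert c s' h ih =>
    rw [Finset.lcm_insert, Finset.sup_insert]
    have h1 : f c ≠ 0 := hf c (Finset.mem_insert_self c s')
    have h2 : s'.lcm f ≠ 0 := my_lcm_ne_zero s' f fun i hi => hf i (Finset.mem_insert_of_mem hi)
    have : lcm (f c) (s'.lcm f) = Nat.lcm (f c) (s'.lcm f) := rfl
    rw [this, Nat.factorization_lcm h1 h2]
    simp only [Finsupp.sup_apply, ih fun i hi => hf i (Finset.mem_insert_of_mem hi)]

private lemma my_aux (p : ℕ) (hp : p.Prime) (E : ℕ) (s : Finset ℕ) (t : ℕ → ℕ)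
    (ht : ∀ i ∈ s, t i ≠ 0)
    (hex : ∀ e, 1 ≤ e → e ≤ E → (s.filter fun i => p ^ e ∣ t i).Nonempty)
    (huniq : ∀ e, E < e → (s.filter fun i => p ^ e ∣ t i).card ≤ 1) :
    padicValNat p ((∏ i ∈ s, t i) / s.lcm t) =
      ∑ e ∈ Finset.Icc 1 E, ((s.filter fun i => p ^ e ∣ t i).card - 1) := by
  classical
  set P := ∏ i ∈ s, t i with hPdef
  set L := s.lcm t with hLdef
  have hP : P ≠ 0 := Finset.prod_ne_zero_iff.mpr ht
  have hL : L ≠ 0 := my_lcm_ne_zero s t ht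
  have hdvd : L ∣ P := Finset.lcm_dvd fun i hi => Finset.dvd_prod_of_mem t hi
  set B := max E (P.factorization p) with hBdef
  have hEB : E ≤ B := le_max_left _ _
  have hPB : P.factorization p ≤ B := le_max_right _ _
  have htB : ∀ i ∈ s, (t i).factorization p ≤ B := by
    intro i hi
    have h1 : (t i).factorization ≤ P.factorization :=
      (Nat.factorization_le_iff_dvd (ht i hi) hP).mpr (Finset.dvd_prod_of_mem t hi)
    exact le_trans (h1 p) hPB
  have hLB : L.factorization p ≤ B := by
    have h1 : L.factorization ≤ P.factorization :=
      (Nat.factorization_le_iff_dvd hL hP).mpr hdvd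
    exact le_trans (h1 p) hPB
  -- counting formula for valuations
  have key1 : ∀ m : ℕ, m ≠ 0 → m.factorization p ≤ B →
      ((Finset.Icc 1 B).filter (fun e => p ^ e ∣ m)).card = m.factorization p := by
    intro m hm hmB
    have heq : (Finset.Icc 1 B).filter (fun e => p ^ e ∣ m)
        = Finset.Icc 1 (m.factorization p) := by
      ext e
      simp only [Finset.mem_filter, Finset.mem_Icc,
        hp.pow_dvd_iff_le_factorization hm]
      omega
    rw [heq, Nat.card_Icc]
    omega
  -- valuation of product
  have hPsum : P.factorization p
      = ∑ e ∈ Finset.Icc 1 B, (s.filter fun i => p ^ e ∣ t i).card := by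
    rw [hPdef, Nat.factorization_prod ht, Finset.sum_apply']
    have : ∀ i ∈ s, (t i).factorization p
        = ∑ e ∈ Finset.Icc 1 B, (if p ^ e ∣ t i then 1 else 0) := by
      intro i hi
      rw [← Finset.card_filter, key1 (t i) (ht i hi) (htB i hi)]
    rw [Finset.sum_congr rfl this, Finset.sum_comm]
    exact Finset.sum_congr rfl fun e _ => (Finset.card_filter _ _).symm
  -- valuation of lcm
  have hLmax : L.factorization p = s.sup fun i => (t i).factorization p :=
    my_lcm_factorization p s t ht
  have hLdvdIff : ∀ e, 1 ≤ e →
      (p ^ e ∣ L ↔ (s.filter fun i => p ^ e ∣ t i).Nonempty) := by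
    intro e he
    rw [hp.pow_dvd_iff_le_factorization hL, hLmax,
      Finset.le_sup_iff (by omega : (0 : ℕ) < e), Finset.filter_nonempty_iff]
    constructor
    · rintro ⟨i, hi, hle⟩
      exact ⟨i, hi, (hp.pow_dvd_iff_le_factorization (ht i hi)).mpr hle⟩
    · rintro ⟨i, hi, hdvd'⟩
      exact ⟨i, hi, (hp.pow_dvd_iff_le_factorization (ht i hi)).mp hdvd'⟩
  have hLsum : L.factorization p
      = ∑ e ∈ Finset.Icc 1 B,
          (if (s.filter fun i => p ^ e ∣ t i).Nonempty then 1 else 0) := by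
    rw [← key1 L hL hLB, Finset.card_filter]
    refine Finset.sum_congr rfl fun e he => ?_
    rw [Finset.mem_Icc] at he
    simp only [hLdvdIff e he.1]
  -- put it together
  rw [← Nat.factorization_def _ hp, Nat.factorization_div hdvd]
  simp only [Finsupp.coe_tsub, Pi.sub_apply]
  rw [hPsum, hLsum, ← Finset.sum_tsub_distrib]
  · symm
    rw [← Finset.sum_subset (Finset.Icc_subset_Icc_right hEB)]
    · refine Finset.sum_congr rfl fun e he => ?_
      rw [Finset.mem_Icc] at he
      have hne : (s.filter fun i => p ^ e ∣ t i).Nonempty := hex e he.1 he.2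
      rw [if_pos hne]
    · intro e he hnot
      rw [Finset.mem_Icc] at he
      rw [Finset.mem_Icc] at hnot
      have hE : E < e := by omega
      have hle1 := huniq e hE
      split_ifs with h
      · have := h.card_pos
        omega
      · have : (s.filter fun i => p ^ e ∣ t i).card = 0 :=
          Finset.card_eq_zero.mpr (Finset.not_nonempty_iff_eq_empty.mp h)
        omega
  · intro e _
    split_ifs with h
    · exact h.card_pos
    · exact Nat.zero_le _

theorem stmt11 (k a b : ℕ) (hk : 1 ≤ k) (ha : 1 ≤ a) (hab : Nat.gcd a b = 1)
    (p : ℕ) (hp : p.Prime) (hpa : ¬ p ∣ a) (n : ℕ) (hn : 1 ≤ n) :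
    padicValNat p ((∏ i ∈ Finset.range (k+1), (b + (n + i) * a)) /
        (Finset.range (k+1)).lcm (fun i => b + (n + i) * a)) =
      ∑ e ∈ Finset.Icc 1 (Nat.log p k),
        (((Finset.range (k+1)).filter (fun i => p ^ e ∣ b + (n + i) * a)).card - 1) := by
  classical
  have hco : Nat.Coprime p a := hp.coprime_iff_not_dvd.mpr hpa
  have ht : ∀ i ∈ Finset.range (k+1), b + (n + i) * a ≠ 0 := by
    intro i _
    have : 0 < (n + i) * a := Nat.mul_pos (by omega) ha
    omega
  refine my_aux p hp (Nat.log p k) (Finset.range (k+1)) (fun i => b + (n + i) * a) ht ?_ ?_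
  · -- existence
    intro e he heE
    have hqk : p ^ e ≤ k := by
      calc p ^ e ≤ p ^ Nat.log p k := Nat.pow_le_pow_right hp.one_lt.le heE
      _ ≤ k := Nat.pow_log_le_self p (by omega)
    set q := p ^ e with hq
    have hq1 : 1 < q := by
      calc 1 < p := hp.one_lt
      _ = p ^ 1 := (pow_one p).symm
      _ ≤ q := Nat.pow_le_pow_right hp.one_lt.le he
    haveI : NeZero q := ⟨by omega⟩
    have hcoaq : Nat.Coprime a q := (hco.pow_left e).symm
    set u := ZMod.unitOfCoprime a hcoaq with hu
    set x : ZMod q := (-(b + n * a : ℕ) : ZMod q) * (↑u⁻¹ : ZMod q) with hx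
    refine ⟨x.val, Finset.mem_filter.mpr ⟨?_, ?_⟩⟩
    · rw [Finset.mem_range]
      have := ZMod.val_lt x
      omega
    · rw [← ZMod.natCast_eq_zero_iff]
      push_cast
      have hcast : ((x.val : ℕ) : ZMod q) = x := by
        rw [ZMod.natCast_val, ZMod.cast_id]
      rw [hcast]
      have hinv : (↑u⁻¹ : ZMod q) * (a : ZMod q) = 1 := by
        have : ((u : (ZMod q)ˣ) : ZMod q) = (a : ZMod q) := ZMod.coe_unitOfCoprime a hcoaq
        rw [← this]
        exact u.inv_mul
      rw [hx]
      push_cast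
      linear_combination (-(b : ZMod q) - n * a) * hinv
  · -- uniqueness
    intro e hE
    have hkq : k < p ^ e := by
      calc k < p ^ (Nat.log p k + 1) := Nat.lt_pow_succ_log_self hp.one_lt k
      _ ≤ p ^ e := Nat.pow_le_pow_right hp.one_lt.le (by omega)
    rw [Finset.card_le_one]
    intro i hi j hj
    rw [Finset.mem_filter, Finset.mem_range] at hi hj
    have hcoq : Nat.Coprime (p ^ e) a := hco.pow_left e
    rcases le_total i j with hij | hij
    · have hsub : (b + (n + j) * a) - (b + (n + i) * a) = (j - i) * a := by
        have h1 : b + (n + i) * a ≤ b + (n + j) * a := by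
          have := Nat.mul_le_mul_right a (by omega : n + i ≤ n + j)
          omega
        zify [hij, h1]
        ring
      have hd : p ^ e ∣ (j - i) * a := by
        rw [← hsub]; exact Nat.dvd_sub hj.2 hi.2
      have hd2 : p ^ e ∣ (j - i) := (Nat.Coprime.dvd_of_dvd_mul_right hcoq) hd
      have : j - i = 0 := by
        by_contra hne
        have := Nat.le_of_dvd (by omega) hd2
        omega
      omega
    · have hsub : (b + (n + i) * a) - (b + (n + j) * a) = (i - j) * a := by
        have h1 : b + (n + j) * a ≤ b + (n + i) * a := by
          have := Nat.mul_le_mul_right a (by omega : n + j ≤ n + i)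
          omega
        zify [hij, h1]
        ring
      have hd : p ^ e ∣ (i - j) * a := by
        rw [← hsub]; exact Nat.dvd_sub hi.2 hj.2
      have hd2 : p ^ e ∣ (i - j) := (Nat.Coprime.dvd_of_dvd_mul_right hcoq) hd
      have : i - j = 0 := by
        by_contra hne
        have := Nat.le_of_dvd (by omega) hd2
        omega
      omega
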